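/- For any formal fan F, the projective realization P(F) is homeomorphic to (|F| ∖ {*})/ℝ_{>0}, where * ∈ |F| is the cone point (the common image of the origins of the cones (ℝ_{≥0})^n) and ℝ_{>0} acts on |F| by the action induced by scalar multiplication on each cone (ℝ_{≥0})^n. -/

import Mathlib

open CategoryTheory

/-- The category `𝔠` of integral simplicial cones: objects are positive integers `[n]`, and
morphisms `[k] → [n]` are the injective group homomorphisms `ℤᵏ → ℤⁿ` (encoded as `n × k`
integer matrices) carrying the standard basis of `ℤᵏ` into the cone spanned by the standard
basis of `ℤⁿ` (i.e. with nonnegative entries). -/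
structure ConeCat : Type where
  n : ℕ
  pos : 0 < n

instance : Category ConeCat where
  Hom k n := {A : Matrix (Fin n.n) (Fin k.n) ℤ //
    (∀ i j, 0 ≤ A i j) ∧ Function.Injective A.mulVecLin}
  id k := ⟨1, ⟨fun i j => by by_cases h : i = j <;> simp [Matrix.one_apply, h],
    by rw [Matrix.mulVecLin_one]; exact fun a b h => h⟩⟩
  comp f g := ⟨g.1 * f.1,
    ⟨fun i j => by
        rw [Matrix.mul_apply]
        exact Finset.sum_nonneg fun l _ => mul_nonneg (g.2.1 i l) (f.2.1 l j),
      by rw [Matrix.mulVecLin_mul, LinearMap.coe_comp]; exact g.2.2.comp f.2.2⟩⟩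
  id_comp f := Subtype.ext (Matrix.mul_one _)
  comp_id f := Subtype.ext (Matrix.one_mul _)
  assoc f g h := Subtype.ext (Matrix.mul_assoc _ _ _).symm

/-- The underlying matrix of a morphism of `𝔠`. -/
def homMatrix {k n : ConeCat} (φ : k ⟶ n) : Matrix (Fin n.n) (Fin k.n) ℤ := Subtype.val φ

/-- The points of the disjoint union `⨿ F_n × (ℝ_{≥0})ⁿ` over all cones of a formal fan
`F : 𝔠ᵒᵖ ⥤ Set`. -/
abbrev FanPt (F : ConeCatᵒᵖ ⥤ Type) : Type :=
  Σ (c : ConeCat) (_ : F.obj (Opposite.op c)), {x : Fin c.n → ℝ // ∀ i, 0 ≤ x i}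

/-- The colimit-defining relation for the geometric realization `|F|`: the point `x` in the
chart of `φ^*ξ` is identified with the point `φ_ℝ(x)` in the chart of `ξ`. -/
def fanRel (F : ConeCatᵒᵖ ⥤ Type) : FanPt F → FanPt F → Prop := fun p q =>
  ∃ φ : p.1 ⟶ q.1, F.map φ.op q.2.1 = p.2.1 ∧
    ∀ j, q.2.2.val j = ∑ i, ((homMatrix φ j i : ℤ) : ℝ) * p.2.2.val i

/-- The geometric realization `|F|` of a formal fan, as a quotient topological space. -/
abbrev GeomReal (F : ConeCatᵒᵖ ⥤ Type) : Type := Quot (fanRel F)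

/-- The cone points of `|F|`: the images of the origins of the cones `(ℝ_{≥0})ⁿ`. -/
def conePoints (F : ConeCatᵒᵖ ⥤ Type) : Set (GeomReal F) :=
  {z | ∃ p : FanPt F, (∀ i, p.2.2.val i = 0) ∧ z = Quot.mk (fanRel F) p}

/-- Scaling a point of a chart by a nonnegative scalar `c`. -/
def smulPt {F : ConeCatᵒᵖ ⥤ Type} (c : ℝ) (hc : 0 ≤ c) (p : FanPt F) : FanPt F :=
  ⟨p.1, p.2.1, ⟨fun i => c * p.2.2.val i, fun i => mul_nonneg hc (p.2.2.property i)⟩⟩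

/-- The subspace `|F| ∖ {cone points}`. -/
abbrev GeomNonzero (F : ConeCatᵒᵖ ⥤ Type) : Type := {z : GeomReal F // z ∉ conePoints F}

/-- The orbit relation for the action of `ℝ_{>0}` on `|F| ∖ {cone points}` induced by scalar
multiplication on each cone `(ℝ_{≥0})ⁿ`. -/
def scaleRel (F : ConeCatᵒᵖ ⥤ Type) : GeomNonzero F → GeomNonzero F → Prop := fun z w =>
  ∃ (c : ℝ) (hc : 0 < c) (p : FanPt F),
    z.val = Quot.mk (fanRel F) p ∧ w.val = Quot.mk (fanRel F) (smulPt c hc.le p)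

/-- The quotient `(|F| ∖ {*})/ℝ_{>0}`. -/
abbrev GeomProjQuot (F : ConeCatᵒᵖ ⥤ Type) : Type := Quot (scaleRel F)

/-- The standard simplex `Δ^{n-1}`, realized as `{x ∈ (ℝ_{≥0})ⁿ | ∑ xᵢ = 1}`. -/
abbrev stdSimplex' (n : ℕ) : Type :=
  {x : Fin n → ℝ // (∀ i, 0 ≤ x i) ∧ ∑ i, x i = 1}

/-- The points of the disjoint union `⨿ F_n × Δ^{n-1}`. -/
abbrev SimpPt (F : ConeCatᵒᵖ ⥤ Type) : Type :=
  Σ (c : ConeCat) (_ : F.obj (Opposite.op c)), stdSimplex' c.n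

/-- The colimit-defining relation for the projective realization `P(F)`: the point `x` in the
simplex of `φ^*ξ` is identified with the positive rescaling of `φ_ℝ(x)` in the simplex
of `ξ`. -/
def simpRel (F : ConeCatᵒᵖ ⥤ Type) : SimpPt F → SimpPt F → Prop := fun p q =>
  ∃ φ : p.1 ⟶ q.1, F.map φ.op q.2.1 = p.2.1 ∧
    ∃ c : ℝ, 0 < c ∧ ∀ j, q.2.2.val j = c * ∑ i, ((homMatrix φ j i : ℤ) : ℝ) * p.2.2.val i

/-- The projective realization `P(F)` of a formal fan, as a quotient topological space. -/
abbrev ProjReal (F : ConeCatᵒᵖ ⥤ Type) : Type := Quot (simpRel F)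

namespace ProjProofAux

variable (F : ConeCatᵒᵖ ⥤ Type)

/-- A chart point is zero if all coordinates vanish. -/
def IsZeroPt (p : FanPt F) : Prop := ∀ i, p.2.2.val i = 0

theorem fanRel_zero_iff {p q : FanPt F} (h : fanRel F p q) :
    IsZeroPt F p ↔ IsZeroPt F q := by
  obtain ⟨φ, -, hval⟩ := h
  constructor
  · intro hp j
    rw [hval j]
    exact Finset.sum_eq_zero fun i _ => by rw [hp i, mul_zero]
  · intro hq i
    by_contra hne
    have hpos : 0 < p.2.2.val i := lt_of_le_of_ne (p.2.2.2 i) (Ne.symm hne)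
    have hcol : ∀ j, homMatrix φ j i = 0 := by
      intro j
      have h0 : ∑ l, ((homMatrix φ j l : ℤ) : ℝ) * p.2.2.val l = 0 := by
        rw [← hval j]; exact hq j
      have hterm := (Finset.sum_eq_zero_iff_of_nonneg
        (fun l _ => mul_nonneg (by exact_mod_cast φ.2.1 j l) (p.2.2.2 l))).mp h0 i
        (Finset.mem_univ i)
      rcases mul_eq_zero.mp hterm with h | h
      · exact_mod_cast h
      · exact absurd h hne
    have hv : (homMatrix φ).mulVecLin (Pi.single i 1) = (homMatrix φ).mulVecLin 0 := by
      rw [map_zero]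
      funext j
      simp only [Matrix.mulVecLin_apply, Matrix.mulVec_single, mul_one, Pi.zero_apply,
        MulOpposite.op_one, one_smul, Matrix.col_apply]
      exact hcol j
    have := φ.2.2 hv
    have h1 : (Pi.single i 1 : Fin p.1.n → ℤ) i = 0 := by rw [this]; rfl
    rw [Pi.single_eq_same] at h1
    exact one_ne_zero h1

/-- Whether a class in `|F|` is a cone point, as a lifted predicate. -/
def zeroClass : GeomReal F → Prop :=
  Quot.lift (IsZeroPt F) fun _ _ h => propext (fanRel_zero_iff F h)

theorem mem_conePoints {p : FanPt F} :
    Quot.mk (fanRel F) p ∈ conePoints F ↔ IsZeroPt F p := by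
  constructor
  · rintro ⟨q, hq, heq⟩
    have h2 : zeroClass F (Quot.mk (fanRel F) p) = zeroClass F (Quot.mk (fanRel F) q) :=
      congrArg (zeroClass F) heq
    exact h2.symm.mp hq
  · intro h; exact ⟨p, h, rfl⟩

/-- The coordinate sum of a chart point. -/
def ptSum (p : FanPt F) : ℝ := ∑ i, p.2.2.val i

theorem ptSum_pos {p : FanPt F} (h : ¬ IsZeroPt F p) : 0 < ptSum F p := by
  rw [IsZeroPt] at h; push_neg at h
  obtain ⟨i, hi⟩ := h
  exact Finset.sum_pos' (fun l _ => p.2.2.2 l)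
    ⟨i, Finset.mem_univ i, lt_of_le_of_ne (p.2.2.2 i) (Ne.symm hi)⟩

/-- Normalization of a nonzero chart point to the simplex. -/
noncomputable def normPt (p : FanPt F) (h : ¬ IsZeroPt F p) : SimpPt F :=
  ⟨p.1, p.2.1, ⟨fun i => p.2.2.val i / ptSum F p,
    ⟨fun i => div_nonneg (p.2.2.2 i) (ptSum_pos F h).le,
     by rw [← Finset.sum_div]; exact div_self (ptSum_pos F h).ne'⟩⟩⟩

/-- Inclusion of a simplex point as a chart point. -/
def embedPt (p : SimpPt F) : FanPt F := ⟨p.1, p.2.1, ⟨p.2.2.val, p.2.2.property.1⟩⟩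

theorem embedPt_nonzero (p : SimpPt F) : ¬ IsZeroPt F (embedPt F p) := by
  intro h
  have h1 : (1 : ℝ) = 0 := by
    rw [← p.2.2.property.2]; exact Finset.sum_eq_zero fun i _ => h i
  exact one_ne_zero h1

open Classical in
/-- Normalization, defined on all of the chart space, valued in `Option`. -/
noncomputable def nmapAux (p : FanPt F) : Option (ProjReal F) :=
  if h : IsZeroPt F p then none else some (Quot.mk _ (normPt F p h))

theorem nmapAux_sound {p q : FanPt F} (h : fanRel F p q) : nmapAux F p = nmapAux F q := by
  by_cases hp : IsZeroPt F p
  · have hq := (fanRel_zero_iff F h).mp hp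
    rw [nmapAux, nmapAux, dif_pos hp, dif_pos hq]
  · have hq : ¬ IsZeroPt F q := fun hz => hp ((fanRel_zero_iff F h).mpr hz)
    rw [nmapAux, nmapAux, dif_neg hp, dif_neg hq]
    congr 1
    apply Quot.sound
    obtain ⟨φ, hξ, hval⟩ := h
    refine ⟨φ, hξ, ptSum F p / ptSum F q,
      div_pos (ptSum_pos F hp) (ptSum_pos F hq), fun j => ?_⟩
    have hSp := (ptSum_pos F hp).ne'
    have hSq := (ptSum_pos F hq).ne'
    show q.2.2.val j / ptSum F q
        = ptSum F p / ptSum F q * ∑ i, ((homMatrix φ j i : ℤ) : ℝ) * (p.2.2.val i / ptSum F p)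
    have hsum : ∑ i, ((homMatrix φ j i : ℤ) : ℝ) * (p.2.2.val i / ptSum F p)
        = q.2.2.val j / ptSum F p := by
      rw [hval j, Finset.sum_div]
      exact Finset.sum_congr rfl fun i _ => (mul_div_assoc _ _ _).symm
    rw [hsum]
    field_simp

/-- `nmap` on `|F|`. -/
noncomputable def nmap : GeomReal F → Option (ProjReal F) :=
  Quot.lift (nmapAux F) fun _ _ h => nmapAux_sound F h

theorem embed_mem (p : SimpPt F) : Quot.mk (fanRel F) (embedPt F p) ∉ conePoints F := by
  rw [mem_conePoints]; exact embedPt_nonzero F p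

/-- The forward map on representatives. -/
noncomputable def fwdAux (p : SimpPt F) : GeomProjQuot F :=
  Quot.mk _ ⟨Quot.mk _ (embedPt F p), embed_mem F p⟩

theorem fwdAux_sound {p q : SimpPt F} (h : simpRel F p q) : fwdAux F p = fwdAux F q := by
  obtain ⟨φ, hξ, c, hc, hval⟩ := h
  set r : FanPt F := ⟨q.1, q.2.1, ⟨fun j => ∑ i, ((homMatrix φ j i : ℤ) : ℝ) * p.2.2.val i,
    fun j => Finset.sum_nonneg fun i _ =>
      mul_nonneg (by exact_mod_cast φ.2.1 j i) (p.2.2.2.1 i)⟩⟩ with hr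
  have h1 : fanRel F (embedPt F p) r := ⟨φ, hξ, fun j => rfl⟩
  have h2 : Quot.mk (fanRel F) (embedPt F p) = Quot.mk (fanRel F) r := Quot.sound h1
  have hrmem : Quot.mk (fanRel F) r ∉ conePoints F := h2 ▸ embed_mem F p
  have h3 : embedPt F q = smulPt c hc.le r := by
    exact congrArg (fun v => (⟨q.1, q.2.1, v⟩ : FanPt F))
      (Subtype.ext (funext fun j => hval j))
  calc fwdAux F p = Quot.mk _ ⟨Quot.mk (fanRel F) r, hrmem⟩ := by
        unfold fwdAux; exact congrArg _ (Subtype.ext h2)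
    _ = fwdAux F q :=
        Quot.sound ⟨c, hc, r, rfl, congrArg (Quot.mk (fanRel F)) h3⟩

/-- The forward map `P(F) → (|F|∖{*})/ℝ₊`. -/
noncomputable def fwd : ProjReal F → GeomProjQuot F :=
  Quot.lift (fwdAux F) fun _ _ h => fwdAux_sound F h

theorem nmap_isSome : ∀ z : GeomReal F, z ∉ conePoints F → (nmap F z).isSome := by
  intro z
  induction z using Quot.ind with
  | _ p =>
    intro h
    rw [mem_conePoints] at h
    show (nmapAux F p).isSome
    rw [nmapAux, dif_neg h]; rfl

/-- The backward map on `|F| ∖ {*}`. -/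
noncomputable def bwdAux (z : GeomNonzero F) : ProjReal F :=
  (nmap F z.val).get (nmap_isSome F z.val z.2)

theorem optget {α : Type*} {o : Option α} {a : α} (h : o = some a) (hs : o.isSome) :
    o.get hs = a := by subst h; rfl

theorem bwdAux_mk (p : FanPt F) (h : Quot.mk (fanRel F) p ∉ conePoints F)
    (hz : ¬ IsZeroPt F p) :
    bwdAux F ⟨Quot.mk (fanRel F) p, h⟩ = Quot.mk (simpRel F) (normPt F p hz) := by
  apply optget
  show nmapAux F p = _
  rw [nmapAux, dif_neg hz]

theorem isZero_smul_iff (c : ℝ) (hc : 0 < c) (p : FanPt F) :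
    IsZeroPt F (smulPt c hc.le p) ↔ IsZeroPt F p := by
  constructor
  · intro h i
    have := h i
    rcases mul_eq_zero.mp this with h' | h'
    · exact absurd h' hc.ne'
    · exact h'
  · intro h i
    show c * p.2.2.val i = 0
    rw [h i, mul_zero]

theorem normPt_smul (c : ℝ) (hc : 0 < c) (p : FanPt F) (hp : ¬ IsZeroPt F p)
    (hp' : ¬ IsZeroPt F (smulPt c hc.le p)) :
    normPt F (smulPt c hc.le p) hp' = normPt F p hp := by
  have hS : ptSum F (smulPt c hc.le p) = c * ptSum F p := by
    rw [ptSum, ptSum, Finset.mul_sum]; rfl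
  exact congrArg (fun v => (⟨p.1, p.2.1, v⟩ : SimpPt F))
    (Subtype.ext (funext fun i => by
      show c * p.2.2.val i / ptSum F (smulPt c hc.le p) = p.2.2.val i / ptSum F p
      rw [hS, mul_div_mul_left _ _ hc.ne']))

theorem bwdAux_sound {z w : GeomNonzero F} (h : scaleRel F z w) :
    bwdAux F z = bwdAux F w := by
  obtain ⟨c, hc, p, hz, hw⟩ := h
  have hzp : ¬ IsZeroPt F p := by
    have h2 := z.2; rw [hz, mem_conePoints] at h2; exact h2
  have hwp : ¬ IsZeroPt F (smulPt c hc.le p) :=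
    fun h => hzp ((isZero_smul_iff F c hc p).mp h)
  have hz' : z = ⟨Quot.mk (fanRel F) p, by rw [← hz]; exact z.2⟩ := Subtype.ext hz
  have hw' : w = ⟨Quot.mk (fanRel F) (smulPt c hc.le p), by rw [← hw]; exact w.2⟩ :=
    Subtype.ext hw
  rw [hz', hw', bwdAux_mk F p _ hzp, bwdAux_mk F _ _ hwp, normPt_smul F c hc p hzp hwp]

/-- The backward map. -/
noncomputable def bwd : GeomProjQuot F → ProjReal F :=
  Quot.lift (bwdAux F) fun _ _ h => bwdAux_sound F h

theorem normPt_embedPt (p : SimpPt F) :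
    normPt F (embedPt F p) (embedPt_nonzero F p) = p := by
  have hS : ptSum F (embedPt F p) = 1 := p.2.2.property.2
  have : (⟨p.1, p.2.1, p.2.2⟩ : SimpPt F) = p := rfl
  rw [← this]
  exact congrArg (fun v => (⟨p.1, p.2.1, v⟩ : SimpPt F))
    (Subtype.ext (funext fun i => by
      show p.2.2.val i / ptSum F (embedPt F p) = p.2.2.val i
      rw [hS, div_one]))

theorem left_inv : ∀ a, bwd F (fwd F a) = a := by
  intro a
  induction a using Quot.ind with
  | _ p =>
    show bwd F (fwdAux F p) = _
    rw [fwdAux, bwd]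
    show bwdAux F _ = _
    rw [bwdAux_mk F _ _ (embedPt_nonzero F p), normPt_embedPt]

theorem right_inv : ∀ a, fwd F (bwd F a) = a := by
  intro a
  induction a using Quot.ind with
  | _ z =>
    obtain ⟨zv, hzv⟩ := z
    induction zv using Quot.ind with
    | _ p =>
      have hzp : ¬ IsZeroPt F p := by rw [← mem_conePoints]; exact hzv
      show fwd F (bwdAux F _) = _
      rw [bwdAux_mk F p hzv hzp]
      show fwdAux F (normPt F p hzp) = _
      have hS := ptSum_pos F hzp
      have hemb : embedPt F (normPt F p hzp) = smulPt (ptSum F p)⁻¹ (inv_pos.mpr hS).le p := by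
        exact congrArg (fun v => (⟨p.1, p.2.1, v⟩ : FanPt F))
          (Subtype.ext (funext fun i => by
            show p.2.2.val i / ptSum F p = (ptSum F p)⁻¹ * p.2.2.val i
            rw [inv_mul_eq_div]))
      refine (Quot.sound ⟨(ptSum F p)⁻¹, inv_pos.mpr hS, p, rfl, ?_⟩).symm
      show Quot.mk (fanRel F) (embedPt F (normPt F p hzp)) = _
      rw [hemb]

theorem continuous_fwdAux : Continuous (fwdAux F) := by
  apply continuous_sigma; intro c
  apply continuous_sigma; intro ξ
  show Continuous fun x : stdSimplex' c.n => fwdAux F ⟨c, ξ, x⟩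
  have h1 : Continuous fun x : stdSimplex' c.n => (⟨c, ξ, ⟨x.val, x.2.1⟩⟩ : FanPt F) :=
    continuous_sigmaMk.comp' (continuous_sigmaMk.comp'
      (Continuous.subtype_mk continuous_subtype_val _))
  exact continuous_quot_mk.comp' (Continuous.subtype_mk (continuous_quot_mk.comp' h1) _)

theorem continuous_fwd : Continuous (fwd F) :=
  continuous_quot_lift _ (continuous_fwdAux F)

/-- The disjoint union of the nonzero loci of the charts. -/
abbrev NZPt : Type :=
  Σ (c : ConeCat) (_ : F.obj (Opposite.op c)),
    {y : {x : Fin c.n → ℝ // ∀ i, 0 ≤ x i} // ¬ ∀ i, y.val i = 0}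

/-- Inclusion of the nonzero locus into the chart space. -/
def jmap (e : NZPt F) : FanPt F := ⟨e.1, e.2.1, e.2.2.val⟩

theorem jmap_nonzero (e : NZPt F) : ¬ IsZeroPt F (jmap F e) := fun h => e.2.2.2 h

theorem isOpenMap_jmap : IsOpenMap (jmap F) := by
  rw [isOpenMap_sigma]; intro c
  rw [isOpenMap_sigma]; intro ξ
  have hopen : IsOpen {y : {x : Fin c.n → ℝ // ∀ i, 0 ≤ x i} | ¬ ∀ i, y.val i = 0} := by
    rw [← isClosed_compl_iff]
    have : {y : {x : Fin c.n → ℝ // ∀ i, 0 ≤ x i} | ¬ ∀ i, y.val i = 0}ᶜ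
        = ⋂ i, {y : {x : Fin c.n → ℝ // ∀ i, 0 ≤ x i} | y.val i = 0} := by
      ext y; simp
    rw [this]
    exact isClosed_iInter fun i =>
      isClosed_eq ((continuous_apply i).comp continuous_subtype_val) continuous_const
  show IsOpenMap
    ((@Sigma.mk ConeCat
        (fun c => Σ _ : F.obj (Opposite.op c), {x : Fin c.n → ℝ // ∀ i, 0 ≤ x i}) c) ∘
      (@Sigma.mk (F.obj (Opposite.op c))
        (fun _ => {x : Fin c.n → ℝ // ∀ i, 0 ≤ x i}) ξ) ∘ Subtype.val)
  exact isOpenMap_sigmaMk.comp (isOpenMap_sigmaMk.comp hopen.isOpenMap_subtype_val)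

/-- The restricted quotient map onto `|F| ∖ {*}`. -/
def q2 (e : NZPt F) : GeomNonzero F :=
  ⟨Quot.mk _ (jmap F e), by rw [mem_conePoints]; exact jmap_nonzero F e⟩

theorem continuous_bwdAux_q2 : Continuous fun e => bwdAux F (q2 F e) := by
  apply continuous_sigma; intro c
  apply continuous_sigma; intro ξ
  have heq : (fun y : {y : {x : Fin c.n → ℝ // ∀ i, 0 ≤ x i} // ¬ ∀ i, y.val i = 0} =>
      bwdAux F (q2 F ⟨c, ξ, y⟩))
      = fun y => Quot.mk (simpRel F) (normPt F (jmap F ⟨c, ξ, y⟩) (jmap_nonzero F ⟨c, ξ, y⟩)) := by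
    funext y
    exact bwdAux_mk F _ _ (jmap_nonzero F ⟨c, ξ, y⟩)
  rw [heq]
  have hden : Continuous fun y : {y : {x : Fin c.n → ℝ // ∀ i, 0 ≤ x i} // ¬ ∀ i, y.val i = 0} =>
      ∑ l, y.val.val l :=
    continuous_finset_sum _ fun l _ =>
      (continuous_apply l).comp (continuous_subtype_val.comp continuous_subtype_val)
  have hdenne : ∀ y : {y : {x : Fin c.n → ℝ // ∀ i, 0 ≤ x i} // ¬ ∀ i, y.val i = 0},
      (∑ l, y.val.val l) ≠ 0 :=
    fun y => (ptSum_pos F (p := jmap F ⟨c, ξ, y⟩) (jmap_nonzero F ⟨c, ξ, y⟩)).ne'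
  have h1 : Continuous fun y : {y : {x : Fin c.n → ℝ // ∀ i, 0 ≤ x i} // ¬ ∀ i, y.val i = 0} =>
      (⟨fun i => y.val.val i / ∑ l, y.val.val l,
        (normPt F (jmap F ⟨c, ξ, y⟩) (jmap_nonzero F ⟨c, ξ, y⟩)).2.2.property⟩ :
          stdSimplex' c.n) :=
    Continuous.subtype_mk
      (continuous_pi fun i =>
        (((continuous_apply i).comp'
          (continuous_subtype_val.comp' continuous_subtype_val)).div hden hdenne)) _
  exact continuous_quot_mk.comp'
    ((continuous_sigmaMk (σ := fun c : ConeCat => Σ _ : F.obj (Opposite.op c), stdSimplex' c.n)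
        (i := c)).comp'
      ((continuous_sigmaMk (σ := fun _ : F.obj (Opposite.op c) => stdSimplex' c.n)
        (i := ξ)).comp' h1))

theorem continuous_bwdAux : Continuous (bwdAux F) := by
  rw [continuous_def]
  intro W hW
  have hpre : IsOpen ((fun e => bwdAux F (q2 F e)) ⁻¹' W) :=
    hW.preimage (continuous_bwdAux_q2 F)
  have hT : IsOpen (Subtype.val '' (bwdAux F ⁻¹' W) : Set (GeomReal F)) := by
    rw [← isQuotientMap_quot_mk.isOpen_preimage]
    have hset : Quot.mk (fanRel F) ⁻¹' (Subtype.val '' (bwdAux F ⁻¹' W))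
        = jmap F '' ((fun e => bwdAux F (q2 F e)) ⁻¹' W) := by
      ext p
      constructor
      · rintro ⟨z, hzW, hzval⟩
        have hnz : ¬ IsZeroPt F p := by
          rw [← mem_conePoints, ← hzval]; exact z.2
        refine ⟨⟨p.1, p.2.1, ⟨p.2.2, fun hall => hnz hall⟩⟩, ?_, rfl⟩
        have hq2 : q2 F ⟨p.1, p.2.1, ⟨p.2.2, fun hall => hnz hall⟩⟩ = z :=
          Subtype.ext hzval.symm
        show bwdAux F _ ∈ W
        rw [hq2]; exact hzW
      · rintro ⟨e, heW, rfl⟩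
        exact ⟨q2 F e, heW, rfl⟩
    rw [hset]
    exact isOpenMap_jmap F _ hpre
  have hpreW : bwdAux F ⁻¹' W = Subtype.val ⁻¹' (Subtype.val '' (bwdAux F ⁻¹' W)) := by
    ext z
    constructor
    · intro h; exact ⟨z, h, rfl⟩
    · rintro ⟨z', h', hval⟩
      have h2 : z' = z := Subtype.ext hval
      rwa [← h2]
  rw [hpreW]
  exact hT.preimage continuous_subtype_val

theorem continuous_bwd : Continuous (bwd F) :=
  continuous_quot_lift _ (continuous_bwdAux F)

end ProjProofAux

/-- The projective realization `P(F)` of a formal fan is homeomorphic to the quotient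
`(|F| ∖ {*})/ℝ_{>0}` of the geometric realization minus the cone points by the scaling
action of `ℝ_{>0}`, via the map sending the class of a point of the simplex `Δ^{ξ}` to the
class of the corresponding point of the cone of `ξ`. -/
theorem projReal_homeomorph_quotient_geomReal (F : ConeCatᵒᵖ ⥤ Type) :
    ∃ h : ProjReal F ≃ₜ GeomProjQuot F,
      ∀ (p : SimpPt F)
        (hz : (Quot.mk (fanRel F) ⟨p.1, p.2.1, ⟨p.2.2.val, p.2.2.property.1⟩⟩ : GeomReal F) ∉
          conePoints F),
        h (Quot.mk (simpRel F) p) =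
          Quot.mk (scaleRel F)
            ⟨Quot.mk (fanRel F) ⟨p.1, p.2.1, ⟨p.2.2.val, p.2.2.property.1⟩⟩, hz⟩ := by
  refine ⟨⟨⟨ProjProofAux.fwd F, ProjProofAux.bwd F, ProjProofAux.left_inv F,
    ProjProofAux.right_inv F⟩, ProjProofAux.continuous_fwd F,
    ProjProofAux.continuous_bwd F⟩, fun p hz => rfl⟩
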